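/- Let q be a prime power, let F_q be a finite field with q elements, and let 1 ≤ t ≤ k < n and λ ≥ 1. If C is a t-(n,k,λ)^m_q multiple Grassmannian code, then for any λ + 1 distinct elements X_1, …, X_{λ+1} of C, the subspaces X_1^⊥, …, X_{λ+1}^⊥ (each of dimension n − k) span a subspace of F_q^n of dimension at least n − t + 1; that is, C^⊥ = {X^⊥ : X ∈ C} has minimum (λ+1)-Grassmannian covering n − t + 1 and minimum (λ+1)-Grassmannian distance k − t + 1. -/

import Mathlib

open scoped Classical
set_option maxHeartbeats 1000000

/-- The orthogonal complement of a subspace of `F^n` with respect to the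
standard symmetric bilinear form `b(x,y) = ∑ i, x i * y i`. -/
def perp {F : Type*} [Field F] {n : ℕ}
    (V : Submodule F (Fin n → F)) : Submodule F (Fin n → F) where
  carrier := {x | ∀ v ∈ V, ∑ i, x i * v i = 0}
  zero_mem' := by
    intro v hv
    simp
  add_mem' := by
    intro a b ha hb v hv
    simp only [Set.mem_setOf_eq] at *
    simp [Pi.add_apply, add_mul, Finset.sum_add_distrib, ha v hv, hb v hv]
  smul_mem' := by
    intro c a ha v hv
    simp only [Set.mem_setOf_eq] at *
    simp [Pi.smul_apply, smul_eq_mul, mul_assoc, ← Finset.mul_sum, ha v hv]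


noncomputable def stdB (F : Type*) [Field F] (n : ℕ) : LinearMap.BilinForm F (Fin n → F) :=
  LinearMap.mk₂ F (fun x y => ∑ i, x i * y i)
    (fun a b c => by simp [add_mul, Finset.sum_add_distrib])
    (fun c a b => by simp [mul_assoc, Finset.mul_sum])
    (fun a b c => by simp [mul_add, Finset.sum_add_distrib])
    (fun c a b => by simp [Finset.mul_sum]; exact Finset.sum_congr rfl fun i _ => by ring)

lemma stdB_apply {F : Type*} [Field F] {n : ℕ} (x y : Fin n → F) :
    stdB F n x y = ∑ i, x i * y i := rfl

lemma stdB_refl {F : Type*} [Field F] {n : ℕ} : (stdB F n).IsRefl := by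
  intro x y h
  simpa [stdB_apply, mul_comm] using h

lemma stdB_nondegenerate {F : Type*} [Field F] {n : ℕ} : (stdB F n).Nondegenerate := by
  refine ⟨fun x hx => ?_, fun x hx => ?_⟩
  all_goals
  funext i
  have := hx (Pi.single i 1)
  simpa [stdB_apply, Pi.single_apply, Finset.sum_ite_eq', mul_comm] using this

lemma perp_eq {F : Type*} [Field F] {n : ℕ} (V : Submodule F (Fin n → F)) :
    perp V = (stdB F n).orthogonal V := by
  ext x
  constructor
  · intro hx v hv
    have h := hx v hv
    show stdB F n v x = 0
    rw [stdB_apply]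
    rw [show ∑ i, v i * x i = ∑ i, x i * v i from Finset.sum_congr rfl fun i _ => mul_comm _ _]
    exact h
  · intro hx v hv
    have h : stdB F n v x = 0 := hx v hv
    rw [stdB_apply] at h
    rw [show ∑ i, x i * v i = ∑ i, v i * x i from Finset.sum_congr rfl fun i _ => mul_comm _ _]
    exact h

/-- If `C` is a `t`-`(n,k,l)^m_q` multiple Grassmannian code, then any `l + 1`
distinct codewords `X_1, …, X_{l+1}` of `C` have orthogonal complements
`X_1^⊥, …, X_{l+1}^⊥` spanning a subspace of dimension at least `n - t + 1`;
i.e. `C^⊥` has minimum `(l+1)`-Grassmannian covering `n - t + 1` (equivalently,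
minimum `(l+1)`-Grassmannian distance `k - t + 1`). -/
theorem stmt3 (q : ℕ) (hq : IsPrimePow q) (F : Type) [Field F] [Fintype F]
    (hF : Fintype.card F = q) (n k t l : ℕ)
    (ht1 : 1 ≤ t) (htk : t ≤ k) (hkn : k < n) (hl : 1 ≤ l)
    (C : Set (Submodule F (Fin n → F)))
    (hC : ∀ V ∈ C, Module.finrank F V = k)
    (hmult : ∀ T : Submodule F (Fin n → F), Module.finrank F T = t →
      Set.ncard {V | V ∈ C ∧ T ≤ V} ≤ l) :
    ∀ S : Finset (Submodule F (Fin n → F)), ↑S ⊆ C → S.card = l + 1 →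
      n - t + 1 ≤ Module.finrank F ↥(S.sup fun X => perp X) := by
  intro S hS hScard
  set B := stdB F n with hB
  set W := S.sup fun X => perp X with hWdef
  set J := B.orthogonal W with hJdef
  have hJle : ∀ X ∈ S, J ≤ X := by
    intro X hX
    have h1 : perp X ≤ W := Finset.le_sup hX
    have h2 := LinearMap.BilinForm.orthogonal_le (B := B) h1
    rw [perp_eq, LinearMap.BilinForm.orthogonal_orthogonal stdB_nondegenerate stdB_refl] at h2
    exact h2
  have hJ : Module.finrank F J < t := by
    by_contra h
    push_neg at h
    obtain ⟨f, hf⟩ := exists_linearIndependent_of_le_finrank (R := F) (M := J) h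
    have hfi : LinearIndependent F (J.subtype ∘ f) := hf.map' J.subtype (Submodule.ker_subtype J)
    set T := Submodule.span F (Set.range (J.subtype ∘ f)) with hT
    have hTt : Module.finrank F T = t := by
      rw [finrank_span_eq_card hfi, Fintype.card_fin]
    have hTle : T ≤ J := by
      rw [Submodule.span_le]
      rintro _ ⟨i, rfl⟩
      exact (f i).2
    have hsub : (S : Set (Submodule F (Fin n → F))) ⊆ {V | V ∈ C ∧ T ≤ V} :=
      fun X hX => ⟨hS hX, hTle.trans (hJle X hX)⟩
    have hfinty : Finite (Submodule F (Fin n → F)) :=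
      Finite.of_injective _ SetLike.coe_injective
    have h3 := Set.ncard_le_ncard hsub (Set.toFinite _)
    rw [Set.ncard_coe_finset, hScard] at h3
    have h4 := hmult T hTt
    omega
  have hW : Module.finrank F W = n - Module.finrank F J := by
    have h1 : B.orthogonal J = W :=
      LinearMap.BilinForm.orthogonal_orthogonal stdB_nondegenerate stdB_refl W
    have h2 := LinearMap.BilinForm.finrank_orthogonal (B := B) stdB_nondegenerate J
    rw [h1] at h2
    rw [h2]
    simp
  rw [hW]
  omega
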